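/- Every continuous, non-decreasing, perfectly complementary, and strictly monotonic utility function u : ℝ₊^m → ℝ is strictly quasi-concave: if u(x) > u(y), then u(λx + (1−λ)y) > u(y) for all λ ∈ (0,1). -/

import Mathlib

open scoped NNReal

abbrev Bundle (m : ℕ) := Fin m → ℝ≥0

def PerfComp {m : ℕ} (u : Bundle m → ℝ) : Prop :=
  ∀ x y : Bundle m, u (x ⊓ y) = min (u x) (u y)

def Maximal' {m : ℕ} (u : Bundle m → ℝ) (x : Bundle m) : Prop :=
  ∀ y : Bundle m, u y ≤ u x

/-- Every continuous, non-decreasing, perfectly complementary and strictly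
monotonic utility is strictly quasi-concave. -/
theorem perfComp_strictQuasiConcave {m : ℕ} (u : Bundle m → ℝ)
    (hcont : Continuous u) (hmono : Monotone u) (hpc : PerfComp u)
    (hsm : ∀ x : Bundle m, ¬ Maximal' u x →
      ∀ y : Bundle m, (∀ j, x j < y j) → u x < u y)
    (x y : Bundle m) (hxy : u y < u x)
    (lam : ℝ≥0) (h0 : 0 < lam) (h1 : lam < 1) :
    u y < u (fun j => lam * x j + (1 - lam) * y j) := by
  set z : Bundle m := fun j => lam * x j + (1 - lam) * y j with hz
  set c : Bundle m := fun j => if y j < x j then y j else x j + 1 with hc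
  set b : Bundle m := fun j => if y j < x j then lam * x j + (1 - lam) * y j else x j + 2 with hb
  set v : Bundle m := fun j => if y j < x j then lam * x j + (1 - lam) * y j else x j with hv
  have hsum : lam + (1 - lam) = 1 := by
    rw [add_comm]; exact tsub_add_cancel_of_le h1.le
  -- c ⊓ x = x ⊓ y
  have hcx : c ⊓ x = x ⊓ y := by
    funext j
    simp only [Pi.inf_apply, hc]
    by_cases h : y j < x j
    · simp [h, min_comm, min_eq_right h.le]
    · push_neg at h
      rw [if_neg (not_lt.mpr h), min_comm, min_eq_left (le_add_right le_rfl : x j ≤ x j + 1),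
        min_eq_left h]
  -- b ⊓ x = v
  have hbx : b ⊓ x = v := by
    funext j
    simp only [Pi.inf_apply, hb, hv]
    by_cases h : y j < x j
    · simp only [if_pos h]
      have : lam * x j + (1 - lam) * y j ≤ x j := by
        calc lam * x j + (1 - lam) * y j ≤ lam * x j + (1 - lam) * x j := by
              gcongr
          _ = (lam + (1 - lam)) * x j := (add_mul _ _ _).symm
          _ = x j := by rw [hsum, one_mul]
      exact min_eq_left this
    · simp only [if_neg h]
      exact min_eq_right (le_add_right le_rfl)
  -- u (x ⊓ y) = u y
  have hw : u (x ⊓ y) = u y := by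
    rw [hpc x y, min_eq_right hxy.le]
  -- u c = u y
  have huc : u c = u y := by
    have := hpc c x
    rw [hcx, hw] at this
    rcases min_cases (u c) (u x) with ⟨h1', h2⟩ | ⟨h1', h2⟩
    · rw [this, h1']
    · rw [this] at hxy ⊢; rw [h1'] at hxy ⊢; linarith
  -- c not maximal
  have hcnm : ¬ Maximal' u c := by
    intro hmax
    have := hmax x
    rw [huc] at this
    linarith
  -- c < b pointwise
  have hcb : ∀ j, c j < b j := by
    intro j
    simp only [hc, hb]
    by_cases h : y j < x j
    · simp only [if_pos h]
      calc y j = (lam + (1 - lam)) * y j := by rw [hsum, one_mul]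
        _ = lam * y j + (1 - lam) * y j := add_mul _ _ _
        _ < lam * x j + (1 - lam) * y j := by
            have : lam * y j < lam * x j := by
              exact mul_lt_mul_of_pos_left h h0
            exact add_lt_add_left this _
    · simp only [if_neg h]
      exact add_lt_add_right one_lt_two _
  -- u c < u b
  have hucb : u c < u b := hsm c hcnm b hcb
  -- u v = min (u b) (u x)
  have huv : u v = min (u b) (u x) := by rw [← hbx, hpc b x]
  have hyv : u y < u v := by
    rw [huv]
    rw [huc] at hucb
    exact lt_min hucb hxy
  -- v ≤ z
  have hvz : v ≤ z := by
    intro j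
    simp only [hv, hz]
    by_cases h : y j < x j
    · simp [h]
    · push_neg at h
      simp only [if_neg (not_lt.mpr h)]
      calc x j = (lam + (1 - lam)) * x j := by rw [hsum, one_mul]
        _ = lam * x j + (1 - lam) * x j := add_mul _ _ _
        _ ≤ lam * x j + (1 - lam) * y j := by gcongr
  exact hyv.trans_le (hmono hvz)
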